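/- Let X be a real Banach space, k ≥ 1 an integer, and j : c₀ → X a bounded linear operator which is an isomorphic embedding, i.e., there is c > 0 with ‖j(x)‖ ≥ c‖x‖ for all x ∈ c₀. Then the induced linear map j^{(k)} = j ⊗ ⋯ ⊗ j : ⊗^k c₀ → ⊗^k X between the k-fold algebraic tensor products is an isomorphic embedding for the projective seminorms: there exist constants 0 < c' ≤ C' such that c'·π(z) ≤ π(j^{(k)}(z)) ≤ C'·π(z) for every z ∈ ⊗^k c₀. -/

import Mathlib

open Filter Topology Metric

noncomputable section

/-- The Banach space `c₀` of real sequences converging to zero, with the sup norm. -/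
abbrev c0 : Type := ZeroAtInftyContinuousMap ℕ ℝ

/-- The unit vector basis of `c₀`. -/
def e (n : ℕ) : c0 :=
  { toFun := fun i => if i = n then (1 : ℝ) else 0
    continuous_toFun := continuous_of_discreteTopology
    zero_at_infty' := by
      rw [Filter.cocompact_eq_cofinite]
      refine tendsto_const_nhds.congr' ?_
      have h : {n}ᶜ ∈ (Filter.cofinite : Filter ℕ) := by simp [Filter.cofinite]
      filter_upwards [h] with i hi
      simp only [Set.mem_compl_iff, Set.mem_singleton_iff] at hi
      simp [hi] }

/-- A series `∑ xₙ` is weakly unconditionally Cauchy (w.u.C.) if `∑ |φ (xₙ)| < ∞` for every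
continuous linear functional `φ`. -/
def WUC {X : Type*} [NormedAddCommGroup X] [NormedSpace ℝ X] (x : ℕ → X) : Prop :=
  ∀ φ : X →L[ℝ] ℝ, Summable fun n => |φ (x n)|

/-- A sequence is equivalent to the unit vector basis of `c₀`: there are `0 < c ≤ C` with
`c · maxᵢ |aᵢ| ≤ ‖∑ aᵢ xᵢ‖ ≤ C · maxᵢ |aᵢ|` for all finite scalar families. -/
def IsEquivC0Basis {X : Type*} [NormedAddCommGroup X] [NormedSpace ℝ X] (x : ℕ → X) : Prop :=
  ∃ c C : ℝ, 0 < c ∧ c ≤ C ∧ ∀ (n : ℕ) (a : ℕ → ℝ),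
    c * (⨆ i : Fin n, |a i|) ≤ ‖∑ i ∈ Finset.range n, a i • x i‖ ∧
    ‖∑ i ∈ Finset.range n, a i • x i‖ ≤ C * (⨆ i : Fin n, |a i|)

/-- A map (polynomial) is unconditionally converging if for every w.u.C. series `∑ xₙ` the
sequence of values at the partial sums converges in norm. -/
def UCPoly {X Y : Type*} [NormedAddCommGroup X] [NormedSpace ℝ X]
    [NormedAddCommGroup Y] [NormedSpace ℝ Y] (P : X → Y) : Prop :=
  ∀ x : ℕ → X, WUC x →
    ∃ L : Y, Tendsto (fun n => P (∑ i ∈ Finset.range n, x i)) atTop (𝓝 L)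

/-- An operator is unconditionally converging if it maps w.u.C. series to unconditionally
convergent series. -/
def UCOp {X Y : Type*} [NormedAddCommGroup X] [NormedSpace ℝ X]
    [NormedAddCommGroup Y] [NormedSpace ℝ Y] (T : X → Y) : Prop :=
  ∀ x : ℕ → X, WUC x → Summable fun n => T (x n)

/-- A map (polynomial or operator) is compact if the image of the closed unit ball is
relatively norm compact. -/
def CompactMap {X Y : Type*} [NormedAddCommGroup X] [NormedSpace ℝ X]
    [NormedAddCommGroup Y] [NormedSpace ℝ Y] (P : X → Y) : Prop :=
  IsCompact (closure (P '' Metric.closedBall 0 1))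

/-- A set is relatively weakly compact if its closure in the weak topology is compact. -/
def RelWeakCompact {Y : Type*} [NormedAddCommGroup Y] [NormedSpace ℝ Y] (s : Set Y) : Prop :=
  IsCompact (closure ((toWeakSpace ℝ Y) '' s))

/-- A WUC-set is the image of the closed unit ball of `c₀` under a bounded operator. -/
def IsWUCSet {X : Type*} [NormedAddCommGroup X] [NormedSpace ℝ X] (s : Set X) : Prop :=
  ∃ T : c0 →L[ℝ] X, s = ⇑T '' Metric.closedBall 0 1

open scoped TensorProduct


namespace TPEAux

open PiTensorProduct
open scoped TensorProduct

/-- evaluation at a coordinate as a linear map -/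
def ev (m : ℕ) : c0 →ₗ[ℝ] ℝ where
  toFun f := f m
  map_add' f g := congrFun (ZeroAtInftyContinuousMap.coe_add f g) m
  map_smul' r f := congrFun (ZeroAtInftyContinuousMap.coe_smul r f) m

@[simp] lemma ev_apply (m : ℕ) (f : c0) : ev m f = f m := rfl

lemma abs_apply_le_norm (f : c0) (m : ℕ) : |f m| ≤ ‖f‖ := by
  rw [← ZeroAtInftyContinuousMap.norm_toBCF_eq_norm]
  exact f.toBCF.norm_coe_le_norm m

lemma norm_le_of_forall {M : ℝ} (hM : 0 ≤ M) (f : c0) (h : ∀ m, |f m| ≤ M) : ‖f‖ ≤ M := by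
  rw [← ZeroAtInftyContinuousMap.norm_toBCF_eq_norm]
  exact (BoundedContinuousFunction.norm_le hM).2 h

@[simp] lemma e_apply (n m : ℕ) : e n m = if m = n then (1:ℝ) else 0 := rfl

lemma sum_smul_e_apply (a : ℕ → ℝ) (N m : ℕ) :
    (∑ i ∈ Finset.range N, a i • e i : c0) m = if m < N then a m else 0 := by
  have h2 : (∑ i ∈ Finset.range N, a i • e i : c0) m = ∑ i ∈ Finset.range N, a i * e i m := by
    rw [← ev_apply, map_sum]
    simp only [map_smul, ev_apply, smul_eq_mul]
  rw [h2]
  simp only [e_apply, mul_ite, mul_one, mul_zero]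
  rw [Finset.sum_ite_eq (Finset.range N) m (fun i => a i)]
  simp [Finset.mem_range]

/-- truncation operator -/
def trunc (N : ℕ) : c0 →ₗ[ℝ] c0 :=
  ∑ i ∈ Finset.range N, (ev i).smulRight (e i)

lemma trunc_apply (N : ℕ) (x : c0) (m : ℕ) :
    trunc N x m = if m < N then x m else 0 := by
  have h1 : trunc N x = ∑ i ∈ Finset.range N, (x i) • e i := by
    simp [trunc, LinearMap.sum_apply]
  rw [h1, sum_smul_e_apply]

lemma norm_trunc_le (N : ℕ) (x : c0) : ‖trunc N x‖ ≤ ‖x‖ := by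
  refine norm_le_of_forall (norm_nonneg x) _ (fun m => ?_)
  rw [trunc_apply]
  by_cases hm : m < N
  · simp only [hm, ite_true]; exact abs_apply_le_norm x m
  · simp only [hm, ite_false]; simpa using norm_nonneg x

lemma exists_trunc_close (x : c0) {δ : ℝ} (hδ : 0 < δ) :
    ∃ N₀, ∀ N ≥ N₀, ‖x - trunc N x‖ ≤ δ := by
  have h := x.zero_at_infty'
  rw [Filter.cocompact_eq_cofinite, Nat.cofinite_eq_atTop] at h
  have h2 : ∀ᶠ m in atTop, |x m| ≤ δ := by
    have := Metric.tendsto_nhds.1 h δ hδ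
    filter_upwards [this] with m hm
    simpa [Real.dist_eq] using hm.le
  obtain ⟨N₀, hN₀⟩ := eventually_atTop.1 h2
  refine ⟨N₀, fun N hN => norm_le_of_forall hδ.le _ (fun m => ?_)⟩
  have hsub : (x - trunc N x) m = x m - trunc N x m :=
    congrFun (ZeroAtInftyContinuousMap.coe_sub x (trunc N x)) m
  rw [hsub, trunc_apply]
  by_cases hm : m < N
  · simp [hm, hδ.le]
  · simp only [hm, if_neg, sub_zero, ite_false]
    exact hN₀ m (le_trans hN (not_lt.1 hm))

lemma exists_trunc_uniform {δ : ℝ} (hδ : 0 < δ) {k : ℕ} (L : List (ℝ × (Fin k → c0))) :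
    ∃ N, ∀ q ∈ L, ∀ l : Fin k, ‖q.2 l - trunc N (q.2 l)‖ ≤ δ := by
  suffices h : ∃ N₀, ∀ N ≥ N₀, ∀ q ∈ L, ∀ l : Fin k, ‖q.2 l - trunc N (q.2 l)‖ ≤ δ by
    obtain ⟨N₀, h⟩ := h
    exact ⟨N₀, h N₀ le_rfl⟩
  induction L with
  | nil => exact ⟨0, by simp⟩
  | cons q L ih =>
    obtain ⟨N₁, h1⟩ := ih
    choose g hg using fun l : Fin k => exists_trunc_close (q.2 l) hδ
    refine ⟨max N₁ (Finset.univ.sup g), fun N hN q' hq' l => ?_⟩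
    rcases List.mem_cons.1 hq' with rfl | hq'
    · exact hg l N (le_trans (le_trans (Finset.le_sup (Finset.mem_univ l))
        (le_max_right _ _)) hN)
    · exact h1 N (le_trans (le_max_left _ _) hN) q' hq' l

variable {k : ℕ} {E F : Type*} [SeminormedAddCommGroup E] [NormedSpace ℝ E]
  [SeminormedAddCommGroup F] [NormedSpace ℝ F]

lemma sem_list_sum_le (p : Seminorm ℝ (⨂[ℝ] (_ : Fin k), E)) (L : List (⨂[ℝ] (_ : Fin k), E)) :
    p L.sum ≤ (L.map p).sum := by
  induction L with
  | nil => simp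
  | cons a L ih =>
    simp only [List.sum_cons, List.map_cons]
    exact (map_add_le_add p _ _).trans (by linarith)

lemma sem_finset_sum_le {ι : Type*} (p : Seminorm ℝ (⨂[ℝ] (_ : Fin k), E)) (s : Finset ι)
    (f : ι → (⨂[ℝ] (_ : Fin k), E)) : p (∑ i ∈ s, f i) ≤ ∑ i ∈ s, p (f i) := by
  classical
  induction s using Finset.induction with
  | empty => simp
  | @insert a s h ih =>
    rw [Finset.sum_insert h, Finset.sum_insert h]
    exact (map_add_le_add p _ _).trans (by linarith)

lemma list_map_sub_sum {α β : Type*} [AddCommGroup β] (L : List α) (f g : α → β) :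
    (L.map f).sum - (L.map g).sum = (L.map fun q => f q - g q).sum := by
  induction L with
  | nil => simp
  | cons a L ih =>
    simp only [List.map_cons, List.sum_cons, ← ih]
    abel

/-- pushing `map` through a list representation -/
lemma map_list_rep (u : E →ₗ[ℝ] F) (L : List (ℝ × (Fin k → E))) :
    PiTensorProduct.map (fun _ : Fin k => u)
        ((L.map fun q => q.1 • ⨂ₜ[ℝ] i, q.2 i).sum)
      = (L.map fun q => q.1 • ⨂ₜ[ℝ] i, u (q.2 i)).sum := by
  rw [map_list_sum (PiTensorProduct.map (fun _ : Fin k => u)) _, List.map_map]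
  congr 1
  ext q
  simp [Function.comp, LinearMap.map_smul, PiTensorProduct.map_tprod]

/-- the list giving a representation is a lift -/
lemma pi_le_aux (L : List (ℝ × (Fin k → E))) :
    projectiveSeminorm ((L.map fun q => q.1 • ⨂ₜ[ℝ] i, q.2 i).sum)
      ≤ (L.map fun q => ‖q.1‖ * ∏ i, ‖q.2 i‖).sum := by
  rw [projectiveSeminorm_apply]
  have hmem : (FreeAddMonoid.ofList L) ∈
      lifts ((L.map fun q => q.1 • ⨂ₜ[ℝ] i, q.2 i).sum) := by
    rw [mem_lifts_iff]
    rfl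
  exact ciInf_le_of_le (bddBelow_projectiveSemiNormAux _) ⟨FreeAddMonoid.ofList L, hmem⟩ le_rfl

lemma list_map_pi_le (u : E →ₗ[ℝ] F) (C : ℝ) (hu : ∀ x, ‖u x‖ ≤ C * ‖x‖)
    (L : List (ℝ × (Fin k → E))) :
    projectiveSeminorm (PiTensorProduct.map (fun _ : Fin k => u)
        ((L.map fun q => q.1 • ⨂ₜ[ℝ] i, q.2 i).sum))
      ≤ C ^ k * (L.map fun q => ‖q.1‖ * ∏ i, ‖q.2 i‖).sum := by
  rw [map_list_rep]
  calc projectiveSeminorm ((L.map fun q => q.1 • ⨂ₜ[ℝ] i, u (q.2 i)).sum)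
      ≤ (L.map fun q => ‖q.1‖ * ∏ i, ‖u (q.2 i)‖).sum := by
        have := pi_le_aux (E := F) (k := k) (L.map fun q => (q.1, fun i => u (q.2 i)))
        rw [List.map_map, List.map_map] at this
        exact this
    _ ≤ (L.map fun q => C ^ k * (‖q.1‖ * ∏ i, ‖q.2 i‖)).sum := by
        refine List.sum_le_sum fun q hq => ?_
        have hprod : (∏ i, ‖u (q.2 i)‖) ≤ ∏ i : Fin k, (C * ‖q.2 i‖) :=
          Finset.prod_le_prod (fun i _ => norm_nonneg _) (fun i _ => hu _)
        have h2 : (∏ i : Fin k, (C * ‖q.2 i‖)) = C ^ k * ∏ i, ‖q.2 i‖ := by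
          rw [Finset.prod_mul_distrib, Finset.prod_const, Finset.card_univ, Fintype.card_fin]
        calc ‖q.1‖ * ∏ i, ‖u (q.2 i)‖ ≤ ‖q.1‖ * (C ^ k * ∏ i, ‖q.2 i‖) := by
              refine mul_le_mul_of_nonneg_left ?_ (norm_nonneg _)
              rw [← h2]; exact hprod
          _ = C ^ k * (‖q.1‖ * ∏ i, ‖q.2 i‖) := by ring
    _ = C ^ k * (L.map fun q => ‖q.1‖ * ∏ i, ‖q.2 i‖).sum := List.sum_map_mul_left L _ _

/-- functoriality bound for the projective seminorm -/
lemma map_pi_le (u : E →ₗ[ℝ] F) (C : ℝ) (hC : 0 ≤ C) (hu : ∀ x, ‖u x‖ ≤ C * ‖x‖)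
    (z : ⨂[ℝ] (_ : Fin k), E) :
    projectiveSeminorm (PiTensorProduct.map (fun _ : Fin k => u) z)
      ≤ C ^ k * projectiveSeminorm z := by
  letI := nonempty_subtype.mpr (nonempty_lifts z)
  rw [projectiveSeminorm_apply z, Real.mul_iInf_of_nonneg (pow_nonneg hC k)]
  refine le_ciInf fun p => ?_
  obtain ⟨L, hL⟩ := p
  have hrep : ((FreeAddMonoid.toList L).map fun q => q.1 • ⨂ₜ[ℝ] i, q.2 i).sum = z :=
    (mem_lifts_iff _ _).1 hL
  have h := list_map_pi_le u C hu (FreeAddMonoid.toList L)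
  rw [hrep] at h
  exact h

lemma tprod_sub_le (a b : Fin k → E) (M δ : ℝ)
    (ha : ∀ l, ‖a l‖ ≤ M) (hb : ∀ l, ‖b l‖ ≤ M) (hd : ∀ l, ‖a l - b l‖ ≤ δ) :
    projectiveSeminorm ((⨂ₜ[ℝ] i, a i) - ⨂ₜ[ℝ] i, b i) ≤ k * (δ * M ^ (k - 1)) := by
  classical
  set c : ℕ → (Fin k → E) := fun t l => if (l : ℕ) < t then b l else a l with hc
  have h0 : c 0 = a := by funext l; simp [hc]
  have hkk : c k = b := by funext l; simp [hc, l.isLt]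
  have htel : ((⨂ₜ[ℝ] i, a i) - ⨂ₜ[ℝ] i, b i)
      = ∑ t ∈ Finset.range k, ((⨂ₜ[ℝ] i, c t i) - ⨂ₜ[ℝ] i, c (t + 1) i) := by
    rw [Finset.sum_range_sub' (fun t => ⨂ₜ[ℝ] i, c t i) k, h0, hkk]
  rw [htel]
  refine (sem_finset_sum_le _ _ _).trans ?_
  have hbound : ∀ t ∈ Finset.range k,
      projectiveSeminorm ((⨂ₜ[ℝ] i, c t i) - ⨂ₜ[ℝ] i, c (t + 1) i) ≤ δ * M ^ (k - 1) := by
    intro t ht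
    rw [Finset.mem_range] at ht
    set t' : Fin k := ⟨t, ht⟩ with ht'
    have e1 : c t = Function.update (c (t + 1)) t' (a t') := by
      funext l
      by_cases hl : l = t'
      · subst hl
        simp [hc, Function.update_self, ht']
      · rw [Function.update_of_ne hl]
        have hlt : (l : ℕ) ≠ t := fun h => hl (Fin.ext h)
        by_cases h2 : (l : ℕ) < t
        · simp [hc, h2, Nat.lt_succ_of_lt h2]
        · have h3 : ¬ (l : ℕ) < t + 1 := by omega
          simp [hc, h2, h3]
    have e2 : c (t + 1) = Function.update (c (t + 1)) t' (b t') := by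
      funext l
      by_cases hl : l = t'
      · subst hl
        simp [hc, Function.update_self, ht']
      · rw [Function.update_of_ne hl]
    have e3 : (⨂ₜ[ℝ] i, (Function.update (c (t + 1)) t' (a t' - b t')) i)
        = ((⨂ₜ[ℝ] i, c t i) - ⨂ₜ[ℝ] i, c (t + 1) i) := by
      rw [MultilinearMap.map_update_sub, ← e1, ← e2]
    rw [← e3]
    refine (projectiveSeminorm_tprod_le _).trans ?_
    have h4 : (∏ i, ‖(Function.update (c (t + 1)) t' (a t' - b t')) i‖)
        ≤ ∏ i : Fin k, (if i = t' then δ else M) := by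
      refine Finset.prod_le_prod (fun i _ => norm_nonneg _) (fun i _ => ?_)
      by_cases hi : i = t'
      · subst hi
        simp only [Function.update_self, if_pos rfl]
        exact hd t'
      · rw [Function.update_of_ne hi, if_neg hi]
        by_cases h2 : (i : ℕ) < t + 1
        · simp only [hc, h2, if_pos]; exact hb i
        · simp only [hc, h2, if_neg]; exact ha i
    refine h4.trans ?_
    rw [← Finset.mul_prod_erase Finset.univ _ (Finset.mem_univ t')]
    rw [if_pos rfl]
    have h5 : ∏ i ∈ Finset.univ.erase t', (if i = t' then δ else M) = M ^ (k - 1) := by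
      rw [Finset.prod_congr rfl (fun i hi => if_neg (Finset.ne_of_mem_erase hi)),
        Finset.prod_const, Finset.card_erase_of_mem (Finset.mem_univ t'), Finset.card_univ,
        Fintype.card_fin]
    rw [h5]
  calc (∑ t ∈ Finset.range k, projectiveSeminorm ((⨂ₜ[ℝ] i, c t i) - ⨂ₜ[ℝ] i, c (t + 1) i))
      ≤ ∑ _t ∈ Finset.range k, (δ * M ^ (k - 1)) := Finset.sum_le_sum hbound
    _ = k * (δ * M ^ (k - 1)) := by rw [Finset.sum_const, Finset.card_range]; simp

/-- the local inverse operators, obtained from Hahn-Banach -/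
lemma exists_inverse {X : Type*} [NormedAddCommGroup X] [NormedSpace ℝ X]
    (j : c0 →L[ℝ] X) (c : ℝ) (hc : 0 < c) (hj : ∀ z : c0, c * ‖z‖ ≤ ‖j z‖) (N : ℕ) :
    ∃ v : X →ₗ[ℝ] c0, (∀ y, ‖v y‖ ≤ c⁻¹ * ‖y‖) ∧ v ∘ₗ (j : c0 →ₗ[ℝ] X) = trunc N := by
  have hinj : Function.Injective (j : c0 →ₗ[ℝ] X) := by
    intro x y hxy
    have hxy' : j x = j y := hxy
    have h2 : ‖j (x - y)‖ = 0 := by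
      rw [map_sub, hxy', sub_self, norm_zero]
    have h1 : c * ‖x - y‖ ≤ 0 := h2 ▸ hj (x - y)
    have h3 : ‖x - y‖ ≤ 0 := nonpos_of_mul_nonpos_right (by linarith [mul_comm c ‖x - y‖]) hc
    exact sub_eq_zero.1 (norm_le_zero_iff.1 h3)
  have hφ : ∀ i : ℕ, ∃ φ : X →L[ℝ] ℝ, (∀ x : c0, φ (j x) = x i) ∧ ‖φ‖ ≤ c⁻¹ := by
    intro i
    set eqv : c0 ≃ₗ[ℝ] LinearMap.range (j : c0 →ₗ[ℝ] X) :=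
      LinearEquiv.ofInjective (j : c0 →ₗ[ℝ] X) hinj with heqv
    set g : LinearMap.range (j : c0 →ₗ[ℝ] X) →ₗ[ℝ] ℝ :=
      (ev i) ∘ₗ (eqv.symm : LinearMap.range (j : c0 →ₗ[ℝ] X) →ₗ[ℝ] c0) with hgdef
    have hgx : ∀ x : c0, g ⟨j x, LinearMap.mem_range_self _ x⟩ = x i := by
      intro x
      have hs : eqv.symm ⟨j x, LinearMap.mem_range_self _ x⟩ = x := by
        apply hinj
        exact LinearEquiv.ofInjective_symm_apply (f := (j : c0 →ₗ[ℝ] X)) (h := hinj)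
          ⟨j x, LinearMap.mem_range_self _ x⟩
      simp [hgdef, hs]
    have hgb : ∀ y : LinearMap.range (j : c0 →ₗ[ℝ] X), ‖g y‖ ≤ c⁻¹ * ‖y‖ := by
      intro y
      obtain ⟨x, hx⟩ := y.2
      have hy : y = ⟨j x, LinearMap.mem_range_self _ x⟩ := Subtype.ext hx.symm
      rw [hy]
      have hnx : ‖x‖ ≤ c⁻¹ * ‖j x‖ := by
        rw [inv_mul_eq_div, le_div_iff₀ hc]
        calc ‖x‖ * c = c * ‖x‖ := mul_comm _ _
          _ ≤ ‖j x‖ := hj x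
      have hyn : ‖(⟨j x, LinearMap.mem_range_self _ x⟩ :
          LinearMap.range (j : c0 →ₗ[ℝ] X))‖ = ‖j x‖ := rfl
      rw [hgx x, hyn, Real.norm_eq_abs]
      exact (abs_apply_le_norm x i).trans hnx
    set gc : LinearMap.range (j : c0 →ₗ[ℝ] X) →L[ℝ] ℝ := g.mkContinuous c⁻¹ hgb with hgc
    obtain ⟨φ, hext, hnorm⟩ := exists_extension_norm_eq _ gc
    refine ⟨φ, fun x => ?_, ?_⟩
    · have h1 := hext ⟨j x, LinearMap.mem_range_self _ x⟩
      exact h1.trans (hgx x)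
    · rw [hnorm]
      exact LinearMap.mkContinuous_norm_le _ (inv_nonneg.2 hc.le) _
  choose φ hφj hφn using hφ
  refine ⟨∑ i ∈ Finset.range N, ((φ i : X →ₗ[ℝ] ℝ).smulRight (e i)), ?_, ?_⟩
  · intro y
    have h1 : (∑ i ∈ Finset.range N, ((φ i : X →ₗ[ℝ] ℝ).smulRight (e i))) y
        = ∑ i ∈ Finset.range N, (φ i y) • e i := by
      rw [LinearMap.sum_apply]
      simp [LinearMap.smulRight_apply]
    rw [h1]
    refine norm_le_of_forall (mul_nonneg (inv_nonneg.2 hc.le) (norm_nonneg y)) _ (fun m => ?_)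
    rw [sum_smul_e_apply]
    by_cases hm : m < N
    · simp only [hm, ite_true]
      calc |φ m y| ≤ ‖φ m‖ * ‖y‖ := (φ m).le_opNorm y
        _ ≤ c⁻¹ * ‖y‖ := mul_le_mul_of_nonneg_right (hφn m) (norm_nonneg y)
    · simp only [hm, ite_false, abs_zero]
      exact mul_nonneg (inv_nonneg.2 hc.le) (norm_nonneg y)
  · apply LinearMap.ext
    intro x
    apply DFunLike.ext
    intro m
    have h1 : (∑ i ∈ Finset.range N, ((φ i : X →ₗ[ℝ] ℝ).smulRight (e i))) (j x)
        = ∑ i ∈ Finset.range N, (φ i (j x)) • e i := by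
      rw [LinearMap.sum_apply]
      simp [LinearMap.smulRight_apply]
    show (∑ i ∈ Finset.range N, ((φ i : X →ₗ[ℝ] ℝ).smulRight (e i))) (j x) m = trunc N x m
    rw [h1, sum_smul_e_apply, trunc_apply]
    by_cases hm : m < N
    · simp [hm, hφj m x]
    · simp [hm]

end TPEAux

set_option maxHeartbeats 2000000 in
open PiTensorProduct in
/-- If `j : c₀ → X` is an isomorphic embedding, then `j ⊗ ⋯ ⊗ j : ⊗^k c₀ → ⊗^k X` is an
isomorphic embedding for the projective seminorms. -/
theorem tensor_power_embedding {X : Type*}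
    [NormedAddCommGroup X] [NormedSpace ℝ X] [CompleteSpace X]
    (k : ℕ) (hk : 1 ≤ k) (j : c0 →L[ℝ] X) (c : ℝ) (hc : 0 < c)
    (hj : ∀ z : c0, c * ‖z‖ ≤ ‖j z‖) :
    ∃ c' C' : ℝ, 0 < c' ∧ c' ≤ C' ∧ ∀ z : ⨂[ℝ] (_ : Fin k), c0,
      c' * projectiveSeminorm z ≤
        projectiveSeminorm (PiTensorProduct.map (fun _ : Fin k => (j : c0 →ₗ[ℝ] X)) z) ∧
      projectiveSeminorm (PiTensorProduct.map (fun _ : Fin k => (j : c0 →ₗ[ℝ] X)) z) ≤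
        C' * projectiveSeminorm z := by
  classical
  refine ⟨c ^ k, max (c ^ k) (‖j‖ ^ k), pow_pos hc k, le_max_left _ _, fun z => ?_⟩
  constructor
  · -- lower bound
    set A := projectiveSeminorm (PiTensorProduct.map (fun _ : Fin k => (j : c0 →ₗ[ℝ] X)) z)
      with hA
    have hA0 : 0 ≤ A := apply_nonneg _ _
    have hkey : projectiveSeminorm z ≤ (c⁻¹) ^ k * A := by
      refine le_of_forall_pos_le_add fun ε hε => ?_
      obtain ⟨L0, hL0⟩ := PiTensorProduct.nonempty_lifts z
      set L : List (ℝ × (Fin k → c0)) := FreeAddMonoid.toList L0 with hLdef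
      have hrep : (L.map fun q => q.1 • ⨂ₜ[ℝ] i, q.2 i).sum = z :=
        (PiTensorProduct.mem_lifts_iff _ _).1 hL0
      set M : ℝ := 1 + (L.map fun q => ∑ l, ‖q.2 l‖).sum with hM
      have hsum0 : 0 ≤ (L.map fun q => ∑ l, ‖q.2 l‖).sum := by
        refine List.sum_nonneg fun a ha => ?_
        obtain ⟨q, hq, rfl⟩ := List.mem_map.1 ha
        exact Finset.sum_nonneg fun _ _ => norm_nonneg _
      have hM1 : (1:ℝ) ≤ M := by simp only [hM]; linarith
      have hM0 : 0 ≤ M := le_trans zero_le_one hM1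
      have hMb : ∀ q ∈ L, ∀ l : Fin k, ‖q.2 l‖ ≤ M := by
        intro q hq l
        have h1 : ‖q.2 l‖ ≤ ∑ l', ‖q.2 l'‖ :=
          Finset.single_le_sum (fun _ _ => norm_nonneg _) (Finset.mem_univ l)
        have h2 : (∑ l', ‖q.2 l'‖) ≤ (L.map fun q => ∑ l, ‖q.2 l‖).sum := by
          refine List.single_le_sum (fun a ha => ?_) _ (List.mem_map_of_mem hq)
          obtain ⟨q', hq', rfl⟩ := List.mem_map.1 ha
          exact Finset.sum_nonneg fun _ _ => norm_nonneg _
        simp only [hM]; linarith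
      set S : ℝ := 1 + (L.map fun q => |q.1|).sum with hS
      have habs0 : 0 ≤ (L.map fun q => |q.1|).sum := by
        refine List.sum_nonneg fun a ha => ?_
        obtain ⟨q, hq, rfl⟩ := List.mem_map.1 ha
        exact abs_nonneg _
      have hSb : (L.map fun q => |q.1|).sum ≤ S := by simp only [hS]; linarith
      have hS0 : 0 < S := by simp only [hS]; linarith
      set D : ℝ := S * (k * M ^ (k - 1)) with hD
      have hD0 : 0 ≤ D := by
        refine mul_nonneg hS0.le (mul_nonneg (Nat.cast_nonneg k) (pow_nonneg hM0 _))
      set δ : ℝ := ε / (D + 1) with hδdef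
      have hδpos : 0 < δ := div_pos hε (by linarith)
      obtain ⟨N, hN⟩ := TPEAux.exists_trunc_uniform hδpos L
      obtain ⟨v, hvb, hvj⟩ := TPEAux.exists_inverse j c hc hj N
      have hB1 : projectiveSeminorm
            (PiTensorProduct.map (fun _ : Fin k => TPEAux.trunc N) z) ≤ (c⁻¹) ^ k * A := by
        have hcomp : PiTensorProduct.map (fun _ : Fin k => TPEAux.trunc N) z
            = PiTensorProduct.map (fun _ : Fin k => v)
                (PiTensorProduct.map (fun _ : Fin k => (j : c0 →ₗ[ℝ] X)) z) := by
          rw [← hvj]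
          rw [PiTensorProduct.map_comp (g := fun _ : Fin k => v)
            (f := fun _ : Fin k => (j : c0 →ₗ[ℝ] X))]
          rfl
        rw [hcomp]
        exact TPEAux.map_pi_le v c⁻¹ (inv_nonneg.2 hc.le) hvb _
      have hB2 : projectiveSeminorm
            (z - PiTensorProduct.map (fun _ : Fin k => TPEAux.trunc N) z) ≤ ε := by
        have hdiff : z - PiTensorProduct.map (fun _ : Fin k => TPEAux.trunc N) z
            = (L.map fun q =>
                q.1 • ((⨂ₜ[ℝ] i, q.2 i) - ⨂ₜ[ℝ] i, TPEAux.trunc N (q.2 i))).sum := by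
          conv_lhs => rw [← hrep]
          rw [TPEAux.map_list_rep]
          refine (TPEAux.list_map_sub_sum L (fun q => q.1 • ⨂ₜ[ℝ] i, q.2 i)
            (fun q => q.1 • ⨂ₜ[ℝ] i, TPEAux.trunc N (q.2 i))).trans ?_
          congr 1
          refine List.map_congr_left fun q hq => ?_
          rw [smul_sub]
        rw [hdiff]
        refine le_trans (TPEAux.sem_list_sum_le _ _) ?_
        rw [List.map_map]
        have hstep : ∀ q ∈ L, projectiveSeminorm
            (q.1 • ((⨂ₜ[ℝ] i, q.2 i) - ⨂ₜ[ℝ] i, TPEAux.trunc N (q.2 i)))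
            ≤ |q.1| * (k * (δ * M ^ (k - 1))) := by
          intro q hq
          rw [map_smul_eq_mul, Real.norm_eq_abs]
          refine mul_le_mul_of_nonneg_left ?_ (abs_nonneg _)
          exact TPEAux.tprod_sub_le (fun i => q.2 i) (fun i => TPEAux.trunc N (q.2 i)) M δ
            (hMb q hq) (fun l => (TPEAux.norm_trunc_le N (q.2 l)).trans (hMb q hq l))
            (hN q hq)
        calc (L.map fun q => projectiveSeminorm
              (q.1 • ((⨂ₜ[ℝ] i, q.2 i) - ⨂ₜ[ℝ] i, TPEAux.trunc N (q.2 i)))).sum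
            ≤ (L.map fun q => |q.1| * (k * (δ * M ^ (k - 1)))).sum :=
              List.sum_le_sum hstep
          _ = (L.map fun q => |q.1|).sum * (k * (δ * M ^ (k - 1))) :=
              List.sum_map_mul_right L _ _
          _ ≤ S * (k * (δ * M ^ (k - 1))) := by
              refine mul_le_mul_of_nonneg_right hSb ?_
              exact mul_nonneg (Nat.cast_nonneg k) (mul_nonneg hδpos.le (pow_nonneg hM0 _))
          _ = δ * D := by rw [hD]; ring
          _ ≤ ε := by
              rw [hδdef, div_mul_eq_mul_div, div_le_iff₀ (by linarith : (0:ℝ) < D + 1)]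
              nlinarith
      calc projectiveSeminorm z
          ≤ projectiveSeminorm (PiTensorProduct.map (fun _ : Fin k => TPEAux.trunc N) z)
            + projectiveSeminorm
                (z - PiTensorProduct.map (fun _ : Fin k => TPEAux.trunc N) z) := by
            have h := map_add_le_add projectiveSeminorm
              (PiTensorProduct.map (fun _ : Fin k => TPEAux.trunc N) z)
              (z - PiTensorProduct.map (fun _ : Fin k => TPEAux.trunc N) z)
            simpa using h
        _ ≤ (c⁻¹) ^ k * A + ε := add_le_add hB1 hB2
    calc c ^ k * projectiveSeminorm z ≤ c ^ k * ((c⁻¹) ^ k * A) :=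
          mul_le_mul_of_nonneg_left hkey (pow_nonneg hc.le k)
      _ = A := by
          rw [← mul_assoc, ← mul_pow, mul_inv_cancel₀ hc.ne', one_pow, one_mul]
  · -- upper bound
    refine le_trans (TPEAux.map_pi_le (k := k) (j : c0 →ₗ[ℝ] X) ‖j‖ (norm_nonneg j)
      (fun x => j.le_opNorm x) z) ?_
    exact mul_le_mul_of_nonneg_right (le_max_right _ _) (apply_nonneg _ z)
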